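/- Let e be an edge of an interface element T with |e| ≤ h_T and |T| ≥ c₀ h_T² for some c₀ > 0, and let β̄ be the piecewise constant coefficient with values in [β_*, β^*] ⊂ (0, ∞). Then there is a constant C, depending only on c₀, β_*, β^*, such that for every broken linear function q = a φ₁ + b φ₂ + c φ₃ on T one has ‖β̄ ∇q‖_{L²(e)} ≤ C h_T^{−1/2} ‖β̄^{1/2} ∇q‖_{L²(T)}. -/

import Mathlib

open MeasureTheory Metric
open scoped RealInnerProductSpace

lemma norm_sq_ortho (t n : EuclideanSpace ℝ (Fin 2)) (ht : ‖t‖ = 1) (hn : ‖n‖ = 1)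
    (h : ⟪t, n⟫ = 0) (p q : ℝ) : ‖p • t + q • n‖ ^ 2 = p ^ 2 + q ^ 2 := by
  rw [norm_add_sq_real, norm_smul, norm_smul, ht, hn, real_inner_smul_left,
    real_inner_smul_right, h]
  simp [mul_pow, sq_abs]

/-!
`T ⊂ ℝ²` (Euclidean plane) is a polygon of diameter `h_T`, cut by a line
segment `Γ` into `T⁺`, `T⁻`; `βb` is the piecewise constant coefficient, equal
to `β⁺` on `T⁺` and `β⁻` on `T⁻`, with values in `[β_*, β^*] ⊂ (0,∞)`; `e` is
an edge of `T` with length `|e| ≤ h_T` (measured by the 1-dimensional Hausdorff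
measure `μH[1]`), and `|T| ≥ c₀ h_T²`.  A broken linear function
`q = a φ₁ + b φ₂ + c φ₃` has piecewise gradient
`∇q(x) = b t + c (βb x)⁻¹ n`, where `n ⊥ Γ` is a unit vector and `t = n⊥`. -/

/-- There is a constant `C > 0` depending only on
`c₀, β_*, β^*` such that for every broken linear function `q` on `T`,
`‖βb ∇q‖_{L²(e)} ≤ C h_T^{-1/2} ‖βb^{1/2} ∇q‖_{L²(T)}`. -/
theorem broken_trace_inequality (c₀ βs βS : ℝ) (hc₀ : 0 < c₀)
    (hβs : 0 < βs) (hβsS : βs ≤ βS) :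
    ∃ C > 0, ∀ (hT : ℝ) (T e : Set (EuclideanSpace ℝ (Fin 2)))
      (βb : EuclideanSpace ℝ (Fin 2) → ℝ) (n t : EuclideanSpace ℝ (Fin 2))
      (a b c : ℝ),
      0 < hT →
      MeasurableSet T → MeasurableSet e → Measurable βb →
      (∀ x, βs ≤ βb x ∧ βb x ≤ βS) →
      ‖n‖ = 1 → ‖t‖ = 1 → ⟪t, n⟫ = 0 →
      -- the edge has length at most h_T:
      μH[1] e ≤ ENNReal.ofReal hT →
      -- the element is not degenerate: |T| ≥ c₀ h_T²:
      c₀ * hT ^ 2 ≤ (volume T).toReal →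
      Real.sqrt (∫ x in e, ‖(βb x) • (b • t + (c * (βb x)⁻¹) • n)‖ ^ 2 ∂μH[1]) ≤
        C * hT ^ (-(1 : ℝ) / 2) *
          Real.sqrt (∫ x in T, βb x * ‖b • t + (c * (βb x)⁻¹) • n‖ ^ 2) := by
  have hβS : 0 < βS := lt_of_lt_of_le hβs hβsS
  set K : ℝ := (βS ^ 2 / βs + βS) / c₀ with hK
  have hKpos : 0 < K := by positivity
  refine ⟨Real.sqrt K, Real.sqrt_pos.2 hKpos, ?_⟩
  intro hT T e βb n t a b c hhT hTm hem hβm hβ hn ht htn hμe hvolT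
  have hβx : ∀ x, 0 < βb x := fun x => lt_of_lt_of_le hβs (hβ x).1
  -- pointwise identities
  have hedge : ∀ x, ‖(βb x) • (b • t + (c * (βb x)⁻¹) • n)‖ ^ 2
      = (βb x) ^ 2 * b ^ 2 + c ^ 2 := by
    intro x
    rw [norm_smul, mul_pow, norm_sq_ortho t n ht hn htn]
    have h0 : (βb x) ≠ 0 := (hβx x).ne'
    field_simp
    rw [Real.norm_eq_abs, sq_abs]
  have helt : ∀ x, βb x * ‖b • t + (c * (βb x)⁻¹) • n‖ ^ 2
      = βb x * b ^ 2 + c ^ 2 * (βb x)⁻¹ := by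
    intro x
    rw [norm_sq_ortho t n ht hn htn]
    have h0 : (βb x) ≠ 0 := (hβx x).ne'
    field_simp
  -- measure facts
  have hμe_fin : μH[1] e < ⊤ := lt_of_le_of_lt hμe ENNReal.ofReal_lt_top
  have hvol_fin : volume T < ⊤ := by
    by_contra h
    rw [not_lt, top_le_iff] at h
    rw [h, ENNReal.toReal_top] at hvolT
    have : 0 < c₀ * hT ^ 2 := by positivity
    linarith
  -- edge integral upper bound
  have hIe_le : (∫ x in e, ‖(βb x) • (b • t + (c * (βb x)⁻¹) • n)‖ ^ 2 ∂μH[1])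
      ≤ (βS ^ 2 * b ^ 2 + c ^ 2) * hT := by
    have hint : IntegrableOn (fun x => ‖(βb x) • (b • t + (c * (βb x)⁻¹) • n)‖ ^ 2) e μH[1] := by
      have : IntegrableOn (fun _ : EuclideanSpace ℝ (Fin 2) =>
          (βS ^ 2 * b ^ 2 + c ^ 2)) e μH[1] := integrableOn_const hμe_fin.ne
      refine this.mono' ?_ ?_
      · apply Measurable.aestronglyMeasurable
        simp only [hedge]
        exact ((hβm.pow_const 2).mul_const _).add_const _
      · refine ae_of_all _ fun x => ?_
        rw [hedge x, Real.norm_eq_abs, abs_of_nonneg (by positivity)]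
        have h1 : (βb x) ^ 2 ≤ βS ^ 2 := by
          have := (hβ x).2; have := (hβx x); nlinarith
        nlinarith [sq_nonneg b]
    calc (∫ x in e, ‖(βb x) • (b • t + (c * (βb x)⁻¹) • n)‖ ^ 2 ∂μH[1])
        ≤ ∫ _ in e, (βS ^ 2 * b ^ 2 + c ^ 2) ∂μH[1] := by
          refine setIntegral_mono_on hint (integrableOn_const hμe_fin.ne) hem
            fun x _ => ?_
          rw [hedge x]
          have h1 : (βb x) ^ 2 ≤ βS ^ 2 := by
            have := (hβ x).2; have := (hβx x); nlinarith
          nlinarith [sq_nonneg b]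
      _ = (βS ^ 2 * b ^ 2 + c ^ 2) * (μH[1] e).toReal := by
          rw [setIntegral_const, smul_eq_mul, mul_comm]; rfl
      _ ≤ (βS ^ 2 * b ^ 2 + c ^ 2) * hT := by
          refine mul_le_mul_of_nonneg_left ?_ (by positivity)
          have := ENNReal.toReal_mono ENNReal.ofReal_ne_top hμe
          rwa [ENNReal.toReal_ofReal hhT.le] at this
  -- element integral lower bound
  have hIT_ge : (βs * b ^ 2 + c ^ 2 / βS) * (c₀ * hT ^ 2)
      ≤ ∫ x in T, βb x * ‖b • t + (c * (βb x)⁻¹) • n‖ ^ 2 := by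
    have hint : IntegrableOn (fun x => βb x * ‖b • t + (c * (βb x)⁻¹) • n‖ ^ 2) T volume := by
      have : IntegrableOn (fun _ : EuclideanSpace ℝ (Fin 2) =>
          (βS * b ^ 2 + c ^ 2 / βs)) T volume := integrableOn_const hvol_fin.ne
      refine this.mono' ?_ ?_
      · apply Measurable.aestronglyMeasurable
        simp only [helt]
        exact (hβm.mul_const _).add ((measurable_const.mul hβm.inv))
      · refine ae_of_all _ fun x => ?_
        have hx := hβx x
        rw [helt x, Real.norm_eq_abs, abs_of_nonneg (by positivity)]
        have h1 : βb x ≤ βS := (hβ x).2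
        have h2 : (βb x)⁻¹ ≤ βs⁻¹ := by
          exact inv_anti₀ hβs (hβ x).1
        have := sq_nonneg b; have := sq_nonneg c
        rw [div_eq_mul_inv]
        nlinarith
    calc (βs * b ^ 2 + c ^ 2 / βS) * (c₀ * hT ^ 2)
        ≤ (βs * b ^ 2 + c ^ 2 / βS) * (volume T).toReal := by
          refine mul_le_mul_of_nonneg_left hvolT (by positivity)
      _ = ∫ _ in T, (βs * b ^ 2 + c ^ 2 / βS) := by
          rw [setIntegral_const, smul_eq_mul, mul_comm]; rfl
      _ ≤ ∫ x in T, βb x * ‖b • t + (c * (βb x)⁻¹) • n‖ ^ 2 := by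
          refine setIntegral_mono_on (integrableOn_const hvol_fin.ne) hint hTm
            fun x _ => ?_
          have hx := hβx x
          rw [helt x]
          have h1 : βs ≤ βb x := (hβ x).1
          have h2 : βS⁻¹ ≤ (βb x)⁻¹ := inv_anti₀ hx (hβ x).2
          have := sq_nonneg b; have := sq_nonneg c
          rw [div_eq_mul_inv]
          nlinarith
  -- combine
  set Ie := ∫ x in e, ‖(βb x) • (b • t + (c * (βb x)⁻¹) • n)‖ ^ 2 ∂μH[1]
  set IT := ∫ x in T, βb x * ‖b • t + (c * (βb x)⁻¹) • n‖ ^ 2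
  have hIT0 : 0 ≤ IT :=
    setIntegral_nonneg hTm fun x _ => mul_nonneg (hβx x).le (by positivity)
  have key : Ie ≤ K * hT⁻¹ * IT := by
    have hmid : (βS ^ 2 * b ^ 2 + c ^ 2) ≤ K * c₀ * (βs * b ^ 2 + c ^ 2 / βS) := by
      have hKc : K * c₀ = βS ^ 2 / βs + βS := by
        rw [hK]; field_simp
      rw [hKc]
      have e1 : (βS ^ 2 / βs + βS) * (βs * b ^ 2 + c ^ 2 / βS)
          = βS ^ 2 * b ^ 2 + c ^ 2 + ((βS / βs) * c ^ 2 + βS * βs * b ^ 2) := by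
        field_simp
        ring
      rw [e1]
      have h3 : 0 ≤ (βS / βs) * c ^ 2 := by positivity
      have h4 : 0 ≤ βS * βs * b ^ 2 := by positivity
      linarith
    calc Ie ≤ (βS ^ 2 * b ^ 2 + c ^ 2) * hT := hIe_le
      _ ≤ (K * c₀ * (βs * b ^ 2 + c ^ 2 / βS)) * hT :=
          mul_le_mul_of_nonneg_right hmid hhT.le
      _ = K * hT⁻¹ * ((βs * b ^ 2 + c ^ 2 / βS) * (c₀ * hT ^ 2)) := by
          have h5 : hT⁻¹ * hT ^ 2 = hT := by
            rw [sq, ← mul_assoc, inv_mul_cancel₀ hhT.ne', one_mul]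
          linear_combination (-(K * (βs * b ^ 2 + c ^ 2 / βS) * c₀)) * h5
      _ ≤ K * hT⁻¹ * IT := mul_le_mul_of_nonneg_left hIT_ge (by positivity)
  have hrw : Real.sqrt K * hT ^ (-(1 : ℝ) / 2) * Real.sqrt IT
      = Real.sqrt (K * hT⁻¹ * IT) := by
    rw [Real.sqrt_mul (by positivity), Real.sqrt_mul hKpos.le]
    congr 1
    rw [show (-(1:ℝ)/2) = -(1/2) by ring, Real.rpow_neg hhT.le,
      ← Real.sqrt_eq_rpow, Real.sqrt_inv]
  rw [hrw]
  exact Real.sqrt_le_sqrt key
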